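/- An operator L = A + conj(B) with A, B ∈ B(H²(𝔻)) is a simple composition operator C_φ + conj(C_π) for some analytic φ, π: 𝔻 → 𝔻 if and only if A(zⁿ) = (Az)ⁿ and B(zⁿ) = (Bz)ⁿ for all n ∈ ℕ. -/

import Mathlib

open Complex Metric Filter Topology

noncomputable section

/-- The Hardy space `H²(𝔻)` modeled by square-summable coefficient sequences. -/
abbrev H2 : Type := lp (fun _ : ℕ => ℂ) 2

/-- The analytic function attached to `a ∈ H²`: `z ↦ ∑ aₙ zⁿ`. -/
def toFun (a : H2) (z : ℂ) : ℂ := ∑' n : ℕ, (a : ∀ _ : ℕ, ℂ) n * z ^ n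

/-- A pair `(a, b) : H2 × H2` represents the complex harmonic function `a + conj b`.
This is the inner product of `HH²(𝔻)`: `(a + conj b, c + conj d) = (a,c) + conj (b,d)`
(conjugate-linear in the first entry, following Mathlib's convention).
Note that the scalar action of `HH²(𝔻)` on the pair model is
`c • (a, b) = (c • a, conj c • b)`, since `c (a + conj b) = c a + conj (conj c · b)`. -/
def hinner (p q : H2 × H2) : ℂ :=
  (inner ℂ p.1 q.1 : ℂ) + (starRingEnd ℂ) (inner ℂ p.2 q.2 : ℂ)

/-- The norm of `HH²(𝔻)`. -/
def hnorm (p : H2 × H2) : ℝ := Real.sqrt (‖p.1‖ ^ 2 + ‖p.2‖ ^ 2)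

/-- The operator `A + conj B` acting on `HH²(𝔻)`: `(A + conj B)(a + conj b) = Aa + conj (Bb)`. -/
def opH (A B : H2 →L[ℂ] H2) (p : H2 × H2) : H2 × H2 := (A p.1, B p.2)

/-- The monomial `eₙ = zⁿ` as an element of `H²`; as an element of `HH²` it is `(eH n, 0)`. -/
def eH (n : ℕ) : H2 := lp.single 2 n (1 : ℂ)

/-! ### Auxiliary lemmas -/

open scoped ENNReal NNReal

lemma norm_coeff_le (a : H2) (n : ℕ) : ‖(a : ∀ _ : ℕ, ℂ) n‖ ≤ ‖a‖ :=
  lp.norm_apply_le_norm two_ne_zero a n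

lemma summable_norm_coeff_mul (a : H2) {z : ℂ} (hz : ‖z‖ < 1) :
    Summable (fun n : ℕ => ‖(a : ∀ _ : ℕ, ℂ) n * z ^ n‖) := by
  refine Summable.of_nonneg_of_le (fun n => norm_nonneg _) (fun n => ?_)
    ((summable_geometric_of_lt_one (norm_nonneg z) hz).mul_left ‖a‖)
  rw [norm_mul, norm_pow]
  exact mul_le_mul_of_nonneg_right (norm_coeff_le a n) (by positivity)

lemma hasSum_toFun (a : H2) {z : ℂ} (hz : ‖z‖ < 1) :
    HasSum (fun n : ℕ => (a : ∀ _ : ℕ, ℂ) n * z ^ n) (toFun a z) :=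
  ((summable_norm_coeff_mul a hz).of_norm).hasSum

lemma norm_toFun_le (a : H2) {z : ℂ} (hz : ‖z‖ < 1) :
    ‖toFun a z‖ ≤ (1 - ‖z‖)⁻¹ * ‖a‖ := by
  have h1 : ‖toFun a z‖ ≤ ∑' n : ℕ, ‖(a : ∀ _ : ℕ, ℂ) n * z ^ n‖ :=
    norm_tsum_le_tsum_norm (summable_norm_coeff_mul a hz)
  have h2 : ∑' n : ℕ, ‖(a : ∀ _ : ℕ, ℂ) n * z ^ n‖ ≤ ∑' n : ℕ, ‖a‖ * ‖z‖ ^ n := by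
    refine Summable.tsum_le_tsum (fun n => ?_) (summable_norm_coeff_mul a hz)
      ((summable_geometric_of_lt_one (norm_nonneg z) hz).mul_left ‖a‖)
    rw [norm_mul, norm_pow]
    exact mul_le_mul_of_nonneg_right (norm_coeff_le a n) (by positivity)
  have h3 : ∑' n : ℕ, ‖a‖ * ‖z‖ ^ n = ‖a‖ * (1 - ‖z‖)⁻¹ := by
    rw [tsum_mul_left, tsum_geometric_of_lt_one (norm_nonneg z) hz]
  rw [mul_comm] at h3
  linarith [h1.trans h2]

lemma toFun_eH (n : ℕ) (z : ℂ) : toFun (eH n) z = z ^ n := by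
  rw [toFun, tsum_eq_single n]
  · rw [eH, lp.single_apply_self, one_mul]
  · intro m hm
    rw [eH, lp.single_apply_ne 2 n _ hm, zero_mul]

/-- The evaluation functional at a point of the disk, as a continuous linear map. -/
def evCLM (z : ℂ) (hz : ‖z‖ < 1) : H2 →L[ℂ] ℂ :=
  LinearMap.mkContinuous
    { toFun := fun a => toFun a z
      map_add' := fun a b => by
        simp only [toFun, lp.coeFn_add, Pi.add_apply]
        rw [← Summable.tsum_add ((summable_norm_coeff_mul a hz).of_norm)
          ((summable_norm_coeff_mul b hz).of_norm)]
        exact tsum_congr fun n => by ring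
      map_smul' := fun c a => by
        simp only [toFun, lp.coeFn_smul, Pi.smul_apply, smul_eq_mul, RingHom.id_apply]
        rw [← tsum_mul_left]
        exact tsum_congr fun n => by ring }
    ((1 - ‖z‖)⁻¹) (fun a => norm_toFun_le a hz)

@[simp] lemma evCLM_apply (z : ℂ) (hz : ‖z‖ < 1) (a : H2) : evCLM z hz a = toFun a z := rfl

lemma differentiableOn_toFun (a : H2) : DifferentiableOn ℂ (toFun a) (ball (0 : ℂ) 1) := by
  have h : HasFPowerSeriesOnBall (toFun a)
      (FormalMultilinearSeries.ofScalars ℂ (fun n => (a : ∀ _ : ℕ, ℂ) n)) 0 1 := by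
    refine ⟨?_, one_pos, fun {y} hy => ?_⟩
    · refine le_trans (by simp) (FormalMultilinearSeries.le_radius_of_bound _ ‖a‖ (r := 1)
        fun n => ?_)
      have hb : ‖FormalMultilinearSeries.ofScalars ℂ (fun n => (a : ∀ _ : ℕ, ℂ) n) n‖ ≤ ‖a‖ := by
        refine le_trans ?_ (norm_coeff_le a n)
        refine le_trans (norm_smul_le ((a : ∀ _ : ℕ, ℂ) n)
          (ContinuousMultilinearMap.mkPiAlgebraFin ℂ n ℂ)) ?_
        rw [ContinuousMultilinearMap.norm_mkPiAlgebraFin, mul_one]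
      simpa using hb
    · have hy' : ‖y‖ < 1 := by
        simpa [edist_eq_enorm_sub, ← ENNReal.coe_one, ENNReal.coe_lt_coe,
          ← NNReal.coe_lt_coe] using hy
      simp only [FormalMultilinearSeries.ofScalars_apply_eq, smul_eq_mul, zero_add]
      exact hasSum_toFun a hy'
  have h2 : AnalyticOnNhd ℂ (toFun a) (Metric.eball (0 : ℂ) 1) := h.analyticOnNhd
  have h3 : Metric.eball (0 : ℂ) 1 = ball (0 : ℂ) 1 := by
    rw [← ENNReal.ofReal_one, Metric.emetric_ball]
  rw [h3] at h2
  exact h2.differentiableOn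

lemma norm_eH (n : ℕ) : ‖eH n‖ = 1 := by
  have := lp.norm_single (p := 2) (E := fun _ : ℕ => ℂ) (by norm_num)
    n (1 : ℂ)
  simpa [eH] using this

lemma hasSum_coeff_smul_eH (a : H2) :
    HasSum (fun n : ℕ => (a : ∀ _ : ℕ, ℂ) n • eH n) a := by
  have h := lp.hasSum_single (E := fun _ : ℕ => ℂ) (p := 2) (by norm_num) a
  have he : (fun n : ℕ => (a : ∀ _ : ℕ, ℂ) n • eH n)
      = fun n : ℕ => lp.single 2 n ((a : ∀ _ : ℕ, ℂ) n) := by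
    funext n
    rw [eH, ← lp.single_smul, smul_eq_mul, mul_one]
  rw [he]
  exact h

/-- Evaluation of the coefficient-sum identity, mapped through `T` and an evaluation
functional. -/
lemma hasSum_eval (T : H2 →L[ℂ] H2) (a : H2) {z : ℂ} (hz : ‖z‖ < 1) :
    HasSum (fun n : ℕ => (a : ∀ _ : ℕ, ℂ) n * toFun (T (eH n)) z) (toFun (T a) z) := by
  have hA : HasSum (fun n : ℕ => (a : ∀ _ : ℕ, ℂ) n • T (eH n)) (T a) := by
    have := (hasSum_coeff_smul_eH a).mapL T
    simpa only [map_smul] using this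
  have hE := hA.mapL (evCLM z hz)
  simpa only [map_smul, smul_eq_mul, evCLM_apply] using hE

lemma not_summable_aux : ¬ Summable (fun n : ℕ => 1 / ((n : ℝ) + 1)) := by
  intro hs
  have hs' : Summable (fun n : ℕ => 1 / ((n + 1 : ℕ) : ℝ)) := by
    refine hs.congr fun n => ?_
    push_cast
    ring
  exact Real.not_summable_one_div_natCast
    ((summable_nat_add_iff (f := fun n : ℕ => 1 / ((n : ℝ))) 1).1 hs')

lemma summable_aux : Summable (fun n : ℕ => (1 / ((n : ℝ) + 1)) ^ (2 : ℕ)) := by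
  have h0 : Summable (fun n : ℕ => 1 / ((n : ℝ)) ^ (2 : ℕ)) :=
    Real.summable_one_div_nat_pow.2 one_lt_two
  have h1 : Summable (fun n : ℕ => 1 / (((n + 1 : ℕ) : ℝ)) ^ (2 : ℕ)) :=
    (summable_nat_add_iff (f := fun n : ℕ => 1 / ((n : ℝ)) ^ (2 : ℕ)) 1).2 h0
  refine h1.congr fun n => ?_
  push_cast
  rw [div_pow, one_pow]

/-- The key backward construction, for a single operator. -/
lemma backward (T : H2 →L[ℂ] H2)
    (h : ∀ n : ℕ, ∀ z ∈ ball (0 : ℂ) 1, toFun (T (eH n)) z = toFun (T (eH 1)) z ^ n) :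
    ∃ φ : ℂ → ℂ, DifferentiableOn ℂ φ (ball (0 : ℂ) 1) ∧
      Set.MapsTo φ (ball (0 : ℂ) 1) (ball (0 : ℂ) 1) ∧
      ∀ a : H2, ∀ z ∈ ball (0 : ℂ) 1, toFun (T a) z = toFun a (φ z) := by
  have hdiff : DifferentiableOn ℂ (toFun (T (eH 1))) (ball (0 : ℂ) 1) :=
    differentiableOn_toFun _
  have hle : ∀ z ∈ ball (0 : ℂ) 1, ‖toFun (T (eH 1)) z‖ ≤ 1 := by
    intro z hz
    by_contra hgt
    push_neg at hgt
    have hzn : ‖z‖ < 1 := mem_ball_zero_iff.1 hz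
    have hbound : ∀ n : ℕ, ‖toFun (T (eH 1)) z‖ ^ n ≤ (1 - ‖z‖)⁻¹ * ‖T‖ := by
      intro n
      have hinv : (0 : ℝ) ≤ (1 - ‖z‖)⁻¹ := inv_nonneg.2 (by linarith)
      calc ‖toFun (T (eH 1)) z‖ ^ n = ‖toFun (T (eH 1)) z ^ n‖ := (norm_pow _ _).symm
        _ = ‖toFun (T (eH n)) z‖ := by rw [h n z hz]
        _ ≤ (1 - ‖z‖)⁻¹ * ‖T (eH n)‖ := norm_toFun_le _ hzn
        _ ≤ (1 - ‖z‖)⁻¹ * (‖T‖ * ‖eH n‖) :=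
            mul_le_mul_of_nonneg_left (T.le_opNorm _) hinv
        _ = (1 - ‖z‖)⁻¹ * ‖T‖ := by rw [norm_eH, mul_one]
    obtain ⟨n, hn⟩ := ((tendsto_pow_atTop_atTop_of_one_lt hgt).eventually_gt_atTop
      ((1 - ‖z‖)⁻¹ * ‖T‖)).exists
    exact absurd (hbound n) (not_le.2 hn)
  have hmap : Set.MapsTo (toFun (T (eH 1))) (ball (0 : ℂ) 1) (ball (0 : ℂ) 1) := by
    intro z hz
    rw [mem_ball_zero_iff]
    rcases (hle z hz).lt_or_eq with h1 | h1
    · exact h1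
    exfalso
    have hmax : IsMaxOn (norm ∘ toFun (T (eH 1))) (ball (0 : ℂ) 1) z := by
      intro w hw
      simp only [Function.comp_apply, Set.mem_setOf_eq]
      exact (hle w hw).trans h1.ge
    have heq := Complex.eqOn_of_isPreconnected_of_isMaxOn_norm
      (convex_ball (0 : ℂ) 1).isPreconnected isOpen_ball hdiff hz hmax
    have h0 : (0 : ℂ) ∈ ball (0 : ℂ) 1 := mem_ball_self one_pos
    have hφ0 : toFun (T (eH 1)) 0 = toFun (T (eH 1)) z := heq h0
    have hc1 : ‖toFun (T (eH 1)) z‖ = 1 := h1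
    have hTn0 : ∀ n : ℕ, toFun (T (eH n)) 0 = toFun (T (eH 1)) z ^ n := by
      intro n
      rw [h n 0 h0, hφ0]
    -- the "bad" element of `H2` witnessing unboundedness if `‖c‖ = 1`
    have hsum2 : Summable (fun n : ℕ =>
        ‖((starRingEnd ℂ) (toFun (T (eH 1)) z) ^ n / ((n : ℂ) + 1) : ℂ)‖ ^ (2 : ℝ≥0∞).toReal) := by
      refine summable_aux.congr fun n => ?_
      have hn1 : ‖((n : ℂ) + 1)‖ = (n : ℝ) + 1 := by
        rw [show ((n : ℂ) + 1) = ((n + 1 : ℕ) : ℂ) by push_cast; ring]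
        rw [Complex.norm_natCast]
        push_cast
        ring
      rw [norm_div, norm_pow, RCLike.norm_conj, hc1, one_pow, hn1]
      norm_num
    set av : ∀ _ : ℕ, ℂ := fun n => (starRingEnd ℂ) (toFun (T (eH 1)) z) ^ n / ((n : ℂ) + 1)
      with hav
    have hmem : Memℓp av 2 := memℓp_gen hsum2
    set a : H2 := ⟨av, hmem⟩ with ha
    have hz0 : ‖(0 : ℂ)‖ < 1 := by simp
    have hsum := hasSum_eval T a hz0
    have hterm : ∀ n : ℕ, (a : ∀ _ : ℕ, ℂ) n * toFun (T (eH n)) 0 = 1 / ((n : ℂ) + 1) := by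
      intro n
      have hcoeff : (a : ∀ _ : ℕ, ℂ) n = av n := rfl
      rw [hcoeff, hTn0 n, hav]
      have hcc : (starRingEnd ℂ) (toFun (T (eH 1)) z) * toFun (T (eH 1)) z = 1 := by
        rw [mul_comm, Complex.mul_conj]
        rw [Complex.normSq_eq_norm_sq, hc1]
        norm_num
      rw [div_mul_eq_mul_div, ← mul_pow, hcc, one_pow]
    rw [funext hterm] at hsum
    have hsummable : Summable (fun n : ℕ => ‖(1 / ((n : ℂ) + 1) : ℂ)‖) :=
      summable_norm_iff.2 hsum.summable
    have : Summable (fun n : ℕ => 1 / ((n : ℝ) + 1)) := by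
      refine hsummable.congr fun n => ?_
      rw [norm_div, norm_one]
      rw [show ((n : ℂ) + 1) = ((n + 1 : ℕ) : ℂ) by push_cast; ring, Complex.norm_natCast]
      push_cast
      ring
    exact not_summable_aux this
  refine ⟨toFun (T (eH 1)), hdiff, hmap, ?_⟩
  intro a z hz
  have hzn : ‖z‖ < 1 := mem_ball_zero_iff.1 hz
  have hsum := hasSum_eval T a hzn
  have hsum' : HasSum (fun n : ℕ => (a : ∀ _ : ℕ, ℂ) n * toFun (T (eH 1)) z ^ n)
      (toFun (T a) z) := by
    have he : (fun n : ℕ => (a : ∀ _ : ℕ, ℂ) n * toFun (T (eH n)) z)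
        = fun n : ℕ => (a : ∀ _ : ℕ, ℂ) n * toFun (T (eH 1)) z ^ n := by
      funext n
      rw [h n z hz]
    rwa [he] at hsum
  have h4 : HasSum (fun n : ℕ => (a : ∀ _ : ℕ, ℂ) n * toFun (T (eH 1)) z ^ n)
      (toFun a (toFun (T (eH 1)) z)) :=
    hasSum_toFun a (mem_ball_zero_iff.1 (hmap hz))
  exact hsum'.unique h4

/-- `L = A + conj B` is a simple composition operator `C_φ + conj C_π` (for some analytic
self-maps `φ, π` of `𝔻`) if and only if `A(zⁿ) = (Az)ⁿ` and `B(zⁿ) = (Bz)ⁿ` for all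
`n ∈ ℕ`. -/
theorem stmt18 (A B : H2 →L[ℂ] H2) :
    (∃ φ π : ℂ → ℂ,
      DifferentiableOn ℂ φ (ball (0 : ℂ) 1) ∧
      Set.MapsTo φ (ball (0 : ℂ) 1) (ball (0 : ℂ) 1) ∧
      DifferentiableOn ℂ π (ball (0 : ℂ) 1) ∧
      Set.MapsTo π (ball (0 : ℂ) 1) (ball (0 : ℂ) 1) ∧
      (∀ a : H2, ∀ z ∈ ball (0 : ℂ) 1, toFun (A a) z = toFun a (φ z)) ∧
      (∀ b : H2, ∀ z ∈ ball (0 : ℂ) 1, toFun (B b) z = toFun b (π z))) ↔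
    ((∀ n : ℕ, ∀ z ∈ ball (0 : ℂ) 1, toFun (A (eH n)) z = toFun (A (eH 1)) z ^ n) ∧
     (∀ n : ℕ, ∀ z ∈ ball (0 : ℂ) 1, toFun (B (eH n)) z = toFun (B (eH 1)) z ^ n)) := by
  constructor
  · rintro ⟨φ, π, _, _, _, _, hA, hB⟩
    constructor
    · intro n z hz
      rw [hA (eH n) z hz, hA (eH 1) z hz, toFun_eH, toFun_eH, pow_one]
    · intro n z hz
      rw [hB (eH n) z hz, hB (eH 1) z hz, toFun_eH, toFun_eH, pow_one]
  · rintro ⟨hA, hB⟩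
    obtain ⟨φ, hφd, hφm, hφ⟩ := backward A hA
    obtain ⟨π, hπd, hπm, hπ⟩ := backward B hB
    exact ⟨φ, π, hφd, hφm, hπd, hπm, hφ, hπ⟩
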